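/- Let F be a field, E a field extension of F, and f, g ∈ F[X₁,…,Xₙ] polynomials. If h ∈ E[X₁,…,Xₙ] is a greatest common divisor of f and g considered as polynomials over E, then there is a nonzero λ ∈ E such that λ·h has all coefficients in F. -/

import Mathlib

open MvPolynomial

section Aux

variable {n : ℕ} {F E : Type*} [Field F] [Field E] [Algebra F E]

/-- Units of a multivariate polynomial ring over a field are nonzero constants. -/
lemma aux_isUnit_eq_C : ∀ {k : ℕ} (p : MvPolynomial (Fin k) E), IsUnit p →
    ∃ μ : E, μ ≠ 0 ∧ p = C μ := by
  intro k
  induction k with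
  | zero =>
    intro p hp
    refine ⟨p.coeff 0, ?_, eq_C_of_isEmpty p⟩
    intro h0
    have := eq_C_of_isEmpty p
    rw [h0, map_zero] at this
    exact hp.ne_zero this
  | succ k IH =>
    intro p hp
    have hq : IsUnit (finSuccEquiv E k p) := hp.map (finSuccEquiv E k)
    obtain ⟨r, hr, hCr⟩ := Polynomial.isUnit_iff.mp hq
    obtain ⟨μ, hμ, rfl⟩ := IH r hr
    refine ⟨μ, hμ, ?_⟩
    have : p = (finSuccEquiv E k).symm (Polynomial.C (C μ)) := by
      rw [hCr, AlgEquiv.symm_apply_apply]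
    rw [this]
    have := congrArg (fun ψ => ψ μ) (finSuccEquiv_comp_C_eq_C (R := E) k)
    simpa using this

/-- If linearly independent elements of `E` combine `F`-polynomials to zero,
each polynomial is zero. -/
lemma aux_indep {k : ℕ} (e : Fin k → E) (he : LinearIndependent F e)
    (q : Fin k → MvPolynomial (Fin n) F)
    (hq : ∑ i, C (e i) * MvPolynomial.map (algebraMap F E) (q i) = 0) :
    ∀ i, q i = 0 := by
  intro i
  ext m
  have h2 : ∑ j, (MvPolynomial.coeff m (q j)) • e j = 0 := by
    have := congrArg (MvPolynomial.coeff m) hq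
    simpa [MvPolynomial.coeff_sum, MvPolynomial.coeff_C_mul, MvPolynomial.coeff_map,
      Algebra.smul_def, mul_comm] using this
  simpa using Fintype.linearIndependent_iff.mp he _ h2 i

lemma aux_decomp_one {k : ℕ} (W : Submodule F E) (b : Module.Basis (Fin k) F W)
    (p : MvPolynomial (Fin n) E) (hW : ∀ m, p.coeff m ∈ W) :
    ∃ ps : Fin k → MvPolynomial (Fin n) F,
      p = ∑ i, C ((b i : E)) * MvPolynomial.map (algebraMap F E) (ps i) := by
  classical
  refine ⟨fun i => ∑ m ∈ p.support, monomial m (b.repr ⟨p.coeff m, hW m⟩ i), ?_⟩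
  ext m
  have key : ∀ i, MvPolynomial.coeff m
      (∑ m' ∈ p.support, monomial m' (b.repr ⟨p.coeff m', hW m'⟩ i))
      = b.repr ⟨p.coeff m, hW m⟩ i := by
    intro i
    rw [MvPolynomial.coeff_sum]
    simp only [MvPolynomial.coeff_monomial, Finset.sum_ite_eq' p.support]
    by_cases hm : m ∈ p.support
    · simp [hm]
    · have h0 : (⟨p.coeff m, hW m⟩ : W) = 0 := by
        apply Subtype.ext
        simpa using MvPolynomial.notMem_support_iff.mp hm
      simp [hm, h0]
  rw [MvPolynomial.coeff_sum]
  simp only [MvPolynomial.coeff_C_mul, MvPolynomial.coeff_map, key]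
  have : ∀ j : Fin k, (b j : E) * algebraMap F E (b.repr ⟨p.coeff m, hW m⟩ j)
      = ((b.repr ⟨p.coeff m, hW m⟩ j • b j : W) : E) := by
    intro j
    rw [mul_comm, ← Algebra.smul_def]
    rfl
  rw [Finset.sum_congr rfl fun j _ => this j, ← Submodule.coe_sum, Module.Basis.sum_repr]

lemma aux_decomp2 (p q : MvPolynomial (Fin n) E) :
    ∃ (k : ℕ) (e : Fin k → E), LinearIndependent F e ∧
      (∃ ps : Fin k → MvPolynomial (Fin n) F,
        p = ∑ i, C (e i) * MvPolynomial.map (algebraMap F E) (ps i)) ∧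
      (∃ qs : Fin k → MvPolynomial (Fin n) F,
        q = ∑ i, C (e i) * MvPolynomial.map (algebraMap F E) (qs i)) := by
  classical
  set s : Finset E :=
    p.support.image (fun m => p.coeff m) ∪ q.support.image (fun m => q.coeff m) with hs
  set W : Submodule F E := Submodule.span F (s : Set E) with hWdef
  have : FiniteDimensional F W := FiniteDimensional.span_finset F s
  let b : Module.Basis (Fin (Module.finrank F W)) F W := Module.finBasis F W
  have hWp : ∀ m, p.coeff m ∈ W := by
    intro m
    by_cases hm : m ∈ p.support
    · exact Submodule.subset_span (Finset.mem_coe.mpr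
        (Finset.mem_union_left _ (Finset.mem_image_of_mem _ hm)))
    · rw [MvPolynomial.notMem_support_iff.mp hm]; exact W.zero_mem
  have hWq : ∀ m, q.coeff m ∈ W := by
    intro m
    by_cases hm : m ∈ q.support
    · exact Submodule.subset_span (Finset.mem_coe.mpr
        (Finset.mem_union_right _ (Finset.mem_image_of_mem _ hm)))
    · rw [MvPolynomial.notMem_support_iff.mp hm]; exact W.zero_mem
  refine ⟨_, fun i => (b i : E), ?_, aux_decomp_one W b p hWp, aux_decomp_one W b q hWq⟩
  exact b.linearIndependent.map' W.subtype W.ker_subtype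

/-- Key descent lemma: a syzygy over `E` of coprime polynomials over `F`
is a multiple of the obvious one. -/
lemma aux_key (f' g' : MvPolynomial (Fin n) F) (hg' : g' ≠ 0) (hcop : IsRelPrime f' g')
    (f₁ g₁ : MvPolynomial (Fin n) E)
    (hrel : g₁ * MvPolynomial.map (algebraMap F E) f'
      = f₁ * MvPolynomial.map (algebraMap F E) g') :
    ∃ c : MvPolynomial (Fin n) E,
      f₁ = c * MvPolynomial.map (algebraMap F E) f' ∧
      g₁ = c * MvPolynomial.map (algebraMap F E) g' := by
  obtain ⟨k, e, he, ⟨fs, hfs⟩, ⟨gs, hgs⟩⟩ := aux_decomp2 (F := F) f₁ g₁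
  have hzero : ∑ i, C (e i) * MvPolynomial.map (algebraMap F E) (gs i * f' - fs i * g') = 0 := by
    have : ∑ i, C (e i) * MvPolynomial.map (algebraMap F E) (gs i * f' - fs i * g')
        = g₁ * MvPolynomial.map (algebraMap F E) f'
          - f₁ * MvPolynomial.map (algebraMap F E) g' := by
      rw [hfs, hgs, Finset.sum_mul, Finset.sum_mul, ← Finset.sum_sub_distrib]
      congr 1
      ext i
      simp only [map_sub, map_mul]
      ring_nf
    rw [this, hrel, sub_self]
  have hterm : ∀ i, gs i * f' = fs i * g' := by
    intro i
    have := aux_indep e he _ hzero i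
    linear_combination this
  choose cs hcs using fun i => hcop.symm.dvd_of_dvd_mul_right ⟨fs i, by rw [hterm i]; ring⟩
  have hfs' : ∀ i, fs i = cs i * f' := by
    intro i
    have h1 : fs i * g' = (cs i * f') * g' := by
      rw [← hterm i, hcs i]; ring
    exact mul_right_cancel₀ hg' h1
  refine ⟨∑ i, C (e i) * MvPolynomial.map (algebraMap F E) (cs i), ?_, ?_⟩
  · rw [hfs, Finset.sum_mul]
    congr 1
    ext i
    rw [hfs' i, map_mul]
    ring_nf
  · rw [hgs, Finset.sum_mul]
    congr 1
    ext i
    rw [hcs i, map_mul]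
    ring_nf

end Aux

theorem stmt_10 (n : ℕ) (F E : Type*) [Field F] [Field E] [Algebra F E]
    (f g : MvPolynomial (Fin n) F) (h : MvPolynomial (Fin n) E)
    (hdvdf : h ∣ MvPolynomial.map (algebraMap F E) f)
    (hdvdg : h ∣ MvPolynomial.map (algebraMap F E) g)
    (hgcd : ∀ d : MvPolynomial (Fin n) E,
      d ∣ MvPolynomial.map (algebraMap F E) f → d ∣ MvPolynomial.map (algebraMap F E) g →
        d ∣ h) :
    ∃ lam : E, lam ≠ 0 ∧ ∃ h₀ : MvPolynomial (Fin n) F,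
      MvPolynomial.map (algebraMap F E) h₀ = lam • h := by
  set φ := MvPolynomial.map (algebraMap F E) with hφ
  have hφinj : Function.Injective φ :=
    MvPolynomial.map_injective _ (algebraMap F E).injective
  have hφne : ∀ {p : MvPolynomial (Fin n) F}, p ≠ 0 → φ p ≠ 0 := by
    intro p hp hc
    exact hp (hφinj (by simpa using hc))
  by_cases hf0 : f = 0
  · -- h is associated to φ g
    have h1 : φ g ∣ h := hgcd (φ g) (by simp [hf0]) dvd_rfl
    obtain ⟨d, hd⟩ := h1
    obtain ⟨e, he⟩ := hdvdg
    by_cases hg0 : g = 0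
    · -- then h = 0
      have : h = 0 := by rw [hd, hg0]; simp
      exact ⟨1, one_ne_zero, 0, by simp [this]⟩
    · have hgne : φ g ≠ 0 := hφne hg0
      have : φ g * 1 = φ g * (d * e) := by
        rw [mul_one, ← mul_assoc, ← hd, ← he]
      have hde : d * e = 1 := (mul_left_cancel₀ hgne this).symm
      obtain ⟨μ, hμ, rfl⟩ := aux_isUnit_eq_C d (IsUnit.of_mul_eq_one (a := d) e hde)
      refine ⟨μ⁻¹, inv_ne_zero hμ, g, ?_⟩
      rw [hd, smul_eq_C_mul]
      rw [← mul_assoc, mul_comm (C μ⁻¹) (φ g), mul_assoc, ← map_mul, inv_mul_cancel₀ hμ]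
      simp
  · by_cases hg0 : g = 0
    · -- symmetric: h associated to φ f
      have h1 : φ f ∣ h := hgcd (φ f) dvd_rfl (by simp [hg0])
      obtain ⟨d, hd⟩ := h1
      obtain ⟨e, he⟩ := hdvdf
      have hfne : φ f ≠ 0 := hφne hf0
      have : φ f * 1 = φ f * (d * e) := by
        rw [mul_one, ← mul_assoc, ← hd, ← he]
      have hde : d * e = 1 := (mul_left_cancel₀ hfne this).symm
      obtain ⟨μ, hμ, rfl⟩ := aux_isUnit_eq_C d (IsUnit.of_mul_eq_one (a := d) e hde)
      refine ⟨μ⁻¹, inv_ne_zero hμ, f, ?_⟩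
      rw [hd, smul_eq_C_mul]
      rw [← mul_assoc, mul_comm (C μ⁻¹) (φ f), mul_assoc, ← map_mul, inv_mul_cancel₀ hμ]
      simp
    · -- main case
      obtain ⟨f', g', h₀, hcop, hff, hgg⟩ :=
        UniqueFactorizationMonoid.exists_reduced_factors f hf0 g
      have hφh₀dvd : φ h₀ ∣ h := by
        refine hgcd (φ h₀) ⟨φ f', ?_⟩ ⟨φ g', ?_⟩
        · rw [← map_mul, hff]
        · rw [← map_mul, hgg]
      obtain ⟨d, hd⟩ := hφh₀dvd
      obtain ⟨f₁, hf₁⟩ := hdvdf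
      obtain ⟨g₁, hg₁⟩ := hdvdg
      have hh₀0 : h₀ ≠ 0 := fun hc => hf0 (by rw [← hff, hc, zero_mul])
      have hf'0 : f' ≠ 0 := fun hc => hf0 (by rw [← hff, hc, mul_zero])
      have hg'0 : g' ≠ 0 := fun hc => hg0 (by rw [← hgg, hc, mul_zero])
      have hφh₀ : φ h₀ ≠ 0 := hφne hh₀0
      have e1 : φ f' = d * f₁ := by
        apply mul_left_cancel₀ hφh₀
        rw [← map_mul, hff, hf₁, hd]
        ring
      have e2 : φ g' = d * g₁ := by
        apply mul_left_cancel₀ hφh₀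
        rw [← map_mul, hgg, hg₁, hd]
        ring
      have hrel : g₁ * φ f' = f₁ * φ g' := by
        rw [e1, e2]; ring
      obtain ⟨c, hcf, hcg⟩ := aux_key f' g' hg'0 hcop f₁ g₁ hrel
      have hφf' : φ f' ≠ 0 := hφne hf'0
      have hdc : d * c = 1 := by
        have h2 : φ f' * (d * c) = φ f' * 1 := by
          rw [mul_one]
          calc φ f' * (d * c) = d * (c * (map (algebraMap F E)) f') := by ring
            _ = d * f₁ := by rw [← hcf]
            _ = φ f' := e1.symm
        exact mul_left_cancel₀ hφf' h2
      obtain ⟨μ, hμ, rfl⟩ := aux_isUnit_eq_C d (IsUnit.of_mul_eq_one (a := d) c hdc)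
      refine ⟨μ⁻¹, inv_ne_zero hμ, h₀, ?_⟩
      rw [hd, smul_eq_C_mul]
      rw [← mul_assoc, mul_comm (C μ⁻¹) (φ h₀), mul_assoc, ← map_mul, inv_mul_cancel₀ hμ]
      simp
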